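/- arXiv:1101.0558 — 3 statements merged into one kernel-verified Lean document; each statement's English description precedes it below -/
import Mathlib

section
/- Let φ be a faithful normal semifinite weight on a von Neumann algebra M acting on a complex Hilbert space H (normal in the sense that φ admits a representation). Let (x_n) be a sequence in m_φ^sa which is Cauchy with respect to ‖·‖_φ and such that for all f, g ∈ D_φ the limit a(f,g) = lim_n ⟨x_n f, g⟩ exists. Then for every representation (f_i)_{i∈I} of φ, the family (a(f_i, f_i))_{i∈I} is absolutely summable and Σ_{i∈I} a(f_i, f_i) = lim_n φ̃(x_n); in particular, the sum Σ_{i∈I} a(f_i, f_i) does not depend on the choice of the representation of φ. -/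
open scoped ENNReal NNReal ComplexOrder
open Filter Topology

noncomputable section

universe v

variable {H : Type*} [NormedAddCommGroup H] [InnerProductSpace ℂ H] [CompleteSpace H]

/-- A weight on a von Neumann algebra `M` acting on `H`: a map `M⁺ → [0,∞]`
(formalized as a map on all of `B(H)`, with the axioms imposed on the positive
cone of `M`) with `φ(0) = 0` that is additive and positively homogeneous. -/
structure Weight (M : VonNeumannAlgebra H) where
  toFun : (H →L[ℂ] H) → ℝ≥0∞
  map_zero' : toFun 0 = 0
  map_add' : ∀ x y : H →L[ℂ] H, x ∈ M → y ∈ M → x.IsPositive → y.IsPositive →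
    toFun (x + y) = toFun x + toFun y
  map_smul' : ∀ (c : ℝ≥0) (x : H →L[ℂ] H), x ∈ M → x.IsPositive →
    toFun (c • x) = c * toFun x

namespace Weight

variable {M : VonNeumannAlgebra H} (φ : Weight M)

/-- `m_φ⁺ = {x ∈ M⁺ : φ(x) < ∞}`. -/
def mPos : Set (H →L[ℂ] H) := {x | x ∈ M ∧ x.IsPositive ∧ φ.toFun x < ∞}

/-- `m_φ^sa = m_φ⁺ − m_φ⁺`. -/
def mSa : Set (H →L[ℂ] H) := {x | ∃ x₁ ∈ φ.mPos, ∃ x₂ ∈ φ.mPos, x = x₁ - x₂}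

/-- The norm `‖x‖_φ = inf {φ(x₁ + x₂) : x = x₁ − x₂, x₁, x₂ ∈ m_φ⁺}`. -/
def phiNorm (x : H →L[ℂ] H) : ℝ :=
  sInf {r : ℝ | ∃ x₁ ∈ φ.mPos, ∃ x₂ ∈ φ.mPos, x = x₁ - x₂ ∧ r = (φ.toFun (x₁ + x₂)).toReal}

/-- The lineal of the weight:
`D_φ = {f ∈ H : ∃ λ > 0, ⟨x f, f⟩ ≤ λ φ(x) for all x ∈ M⁺}`. -/
def lineal : Set H :=
  {f | ∃ l : ℝ, 0 < l ∧ ∀ x : H →L[ℂ] H, x ∈ M → x.IsPositive →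
    ENNReal.ofReal (inner ℂ (x f) f : ℂ).re ≤ ENNReal.ofReal l * φ.toFun x}

/-- A representation of the weight `φ`: a family `(f_i)` of vectors such that
`∑ᵢ ⟨x f_i, f_i⟩ = φ(x)` (a sum in `[0,∞]`) for every positive `x ∈ M`. -/
def IsRepresentation {I : Type*} (f : I → H) : Prop :=
  ∀ x : H →L[ℂ] H, x ∈ M → x.IsPositive →
    ∑' i, ENNReal.ofReal (inner ℂ (x (f i)) (f i) : ℂ).re = φ.toFun x

/-- `φ` is normal iff it admits a representation. -/
def IsNormal : Prop := ∃ (I : Type v) (f : I → H), φ.IsRepresentation f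

/-- `φ` is faithful iff `φ(x) = 0` implies `x = 0` for positive `x ∈ M`. -/
def IsFaithful : Prop :=
  ∀ x : H →L[ℂ] H, x ∈ M → x.IsPositive → φ.toFun x = 0 → x = 0

/-- `φ` is semifinite iff `φ(x) = sup {φ(y) : y ∈ m_φ⁺, y ≤ x}` for every positive `x ∈ M`. -/
def IsSemifinite : Prop :=
  ∀ x : H →L[ℂ] H, x ∈ M → x.IsPositive →
    φ.toFun x = sSup {r : ℝ≥0∞ | ∃ y ∈ φ.mPos, (x - y).IsPositive ∧ r = φ.toFun y}

/-- The real-linear extension `φ̃` of `φ` to `m_φ^sa`, `φ̃(x₁ − x₂) = φ(x₁) − φ(x₂)`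
(defined via a choice of decomposition; by additivity of `φ` it does not depend
on the choice of the decomposition). -/
def tilde (x : H →L[ℂ] H) : ℝ :=
  letI := Classical.propDecidable
  if h : x ∈ φ.mSa then
    (φ.toFun h.choose).toReal - (φ.toFun h.choose_spec.2.choose).toReal
  else 0

end Weight


namespace Weight

variable {M : VonNeumannAlgebra H} (φ : Weight M)

-- helpers
lemma toFun_add_of_mPos {x₁ x₂ : H →L[ℂ] H} (h₁ : x₁ ∈ φ.mPos) (h₂ : x₂ ∈ φ.mPos) :
    φ.toFun (x₁ + x₂) = φ.toFun x₁ + φ.toFun x₂ :=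
  φ.map_add' x₁ x₂ h₁.1 h₂.1 h₁.2.1 h₂.2.1

lemma add_mem_mPos {x₁ x₂ : H →L[ℂ] H} (h₁ : x₁ ∈ φ.mPos) (h₂ : x₂ ∈ φ.mPos) :
    x₁ + x₂ ∈ φ.mPos := by
  refine ⟨M.toSubalgebra.add_mem h₁.1 h₂.1, h₁.2.1.add h₂.2.1, ?_⟩
  rw [φ.toFun_add_of_mPos h₁ h₂]
  exact ENNReal.add_lt_top.2 ⟨h₁.2.2, h₂.2.2⟩

lemma welldef {x₁ x₂ y₁ y₂ : H →L[ℂ] H} (h₁ : x₁ ∈ φ.mPos) (h₂ : x₂ ∈ φ.mPos)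
    (h₃ : y₁ ∈ φ.mPos) (h₄ : y₂ ∈ φ.mPos) (h : x₁ - x₂ = y₁ - y₂) :
    (φ.toFun x₁).toReal - (φ.toFun x₂).toReal
      = (φ.toFun y₁).toReal - (φ.toFun y₂).toReal := by
  rw [sub_eq_sub_iff_add_eq_add] at h
  have e := congrArg φ.toFun h
  rw [φ.toFun_add_of_mPos h₁ h₄, φ.toFun_add_of_mPos h₃ h₂] at e
  have e' := congrArg ENNReal.toReal e
  rw [ENNReal.toReal_add h₁.2.2.ne h₄.2.2.ne, ENNReal.toReal_add h₃.2.2.ne h₂.2.2.ne] at e'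
  linarith

lemma tilde_eq {x₁ x₂ : H →L[ℂ] H} (h₁ : x₁ ∈ φ.mPos) (h₂ : x₂ ∈ φ.mPos) :
    φ.tilde (x₁ - x₂) = (φ.toFun x₁).toReal - (φ.toFun x₂).toReal := by
  have h : x₁ - x₂ ∈ φ.mSa := ⟨x₁, h₁, x₂, h₂, rfl⟩
  unfold Weight.tilde
  rw [dif_pos h]
  exact φ.welldef h.choose_spec.1 h.choose_spec.2.choose_spec.1 h₁ h₂
    h.choose_spec.2.choose_spec.2.symm

lemma abs_tilde_le_phiNorm {x : H →L[ℂ] H} (hx : x ∈ φ.mSa) :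
    |φ.tilde x| ≤ φ.phiNorm x := by
  obtain ⟨x₁, h₁, x₂, h₂, hd⟩ := hx
  refine le_csInf ⟨_, x₁, h₁, x₂, h₂, hd, rfl⟩ ?_
  rintro r ⟨y₁, hy₁, y₂, hy₂, hd', rfl⟩
  rw [hd', φ.tilde_eq hy₁ hy₂, φ.toFun_add_of_mPos hy₁ hy₂,
    ENNReal.toReal_add hy₁.2.2.ne hy₂.2.2.ne]
  have := abs_sub (φ.toFun y₁).toReal (φ.toFun y₂).toReal
  calc |(φ.toFun y₁).toReal - (φ.toFun y₂).toReal|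
      ≤ |(φ.toFun y₁).toReal| + |(φ.toFun y₂).toReal| := abs_sub _ _
    _ = (φ.toFun y₁).toReal + (φ.toFun y₂).toReal := by
        rw [abs_of_nonneg ENNReal.toReal_nonneg, abs_of_nonneg ENNReal.toReal_nonneg]

lemma im_inner_eq_zero {x : H →L[ℂ] H} (hx : x ∈ φ.mSa) (g : H) :
    (inner ℂ (x g) g : ℂ).im = 0 := by
  obtain ⟨x₁, h₁, x₂, h₂, rfl⟩ := hx
  have hsa : IsSelfAdjoint (x₁ - x₂) := h₁.2.1.isSelfAdjoint.sub h₂.2.1.isSelfAdjoint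
  have hsym := ContinuousLinearMap.isSelfAdjoint_iff_isSymmetric.mp hsa
  have h := hsym g g
  simp only [ContinuousLinearMap.coe_coe] at h
  have h2 : (starRingEnd ℂ) (inner ℂ ((x₁ - x₂) g) g : ℂ) = inner ℂ ((x₁ - x₂) g) g := by
    rw [inner_conj_symm]; exact h.symm
  exact Complex.conj_eq_iff_im.mp h2


lemma mem_lineal_of_rep {I : Type*} {f : I → H} (hf : φ.IsRepresentation f) (i : I) :
    f i ∈ φ.lineal := by
  refine ⟨1, one_pos, fun y hyM hypos => ?_⟩
  rw [ENNReal.ofReal_one, one_mul, ← hf y hyM hypos]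
  exact ENNReal.le_tsum i

lemma rep_pos {I : Type*} {f : I → H} (hf : φ.IsRepresentation f)
    {y : H →L[ℂ] H} (hy : y ∈ φ.mPos) :
    Summable (fun i => (inner ℂ (y (f i)) (f i) : ℂ).re) ∧
      ∑' i, (inner ℂ (y (f i)) (f i) : ℂ).re = (φ.toFun y).toReal := by
  have hrep := hf y hy.1 hy.2.1
  have hnn : ∀ i, 0 ≤ (inner ℂ (y (f i)) (f i) : ℂ).re := fun i => hy.2.1.re_inner_nonneg_left (f i)
  have hfin : ∑' i, ENNReal.ofReal (inner ℂ (y (f i)) (f i) : ℂ).re ≠ ∞ := by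
    rw [hrep]; exact hy.2.2.ne
  have hs := ENNReal.summable_toReal hfin
  have heq : ∀ i, (ENNReal.ofReal (inner ℂ (y (f i)) (f i) : ℂ).re).toReal
      = (inner ℂ (y (f i)) (f i) : ℂ).re := fun i => ENNReal.toReal_ofReal (hnn i)
  constructor
  · exact hs.congr heq
  · rw [← tsum_congr heq, ← ENNReal.tsum_toReal_eq (fun i => ENNReal.ofReal_ne_top), hrep]

lemma key {I : Type*} {f : I → H} (hf : φ.IsRepresentation f)
    {x x₁ x₂ : H →L[ℂ] H} (h₁ : x₁ ∈ φ.mPos) (h₂ : x₂ ∈ φ.mPos) (hd : x = x₁ - x₂) :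
    Summable (fun i => |(inner ℂ (x (f i)) (f i) : ℂ).re|) ∧
      ∑' i, |(inner ℂ (x (f i)) (f i) : ℂ).re| ≤ (φ.toFun (x₁ + x₂)).toReal ∧
      ∑' i, (inner ℂ (x (f i)) (f i) : ℂ).re = φ.tilde x := by
  obtain ⟨hP, hPs⟩ := φ.rep_pos hf h₁
  obtain ⟨hQ, hQs⟩ := φ.rep_pos hf h₂
  have hPnn : ∀ i, 0 ≤ (inner ℂ (x₁ (f i)) (f i) : ℂ).re := fun i => h₁.2.1.re_inner_nonneg_left (f i)
  have hQnn : ∀ i, 0 ≤ (inner ℂ (x₂ (f i)) (f i) : ℂ).re := fun i => h₂.2.1.re_inner_nonneg_left (f i)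
  have hsplit : ∀ i, (inner ℂ (x (f i)) (f i) : ℂ).re
      = (inner ℂ (x₁ (f i)) (f i) : ℂ).re - (inner ℂ (x₂ (f i)) (f i) : ℂ).re := by
    intro i
    rw [hd]
    simp [ContinuousLinearMap.sub_apply, inner_sub_left]
  have hbound : ∀ i, |(inner ℂ (x (f i)) (f i) : ℂ).re|
      ≤ (inner ℂ (x₁ (f i)) (f i) : ℂ).re + (inner ℂ (x₂ (f i)) (f i) : ℂ).re := by
    intro i
    rw [hsplit i]
    calc |(inner ℂ (x₁ (f i)) (f i) : ℂ).re - (inner ℂ (x₂ (f i)) (f i) : ℂ).re|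
        ≤ |(inner ℂ (x₁ (f i)) (f i) : ℂ).re| + |(inner ℂ (x₂ (f i)) (f i) : ℂ).re| := abs_sub _ _
      _ = _ := by rw [abs_of_nonneg (hPnn i), abs_of_nonneg (hQnn i)]
  have hPQ := hP.add hQ
  have habs : Summable (fun i => |(inner ℂ (x (f i)) (f i) : ℂ).re|) :=
    Summable.of_nonneg_of_le (fun i => abs_nonneg _) hbound hPQ
  refine ⟨habs, ?_, ?_⟩
  · calc ∑' i, |(inner ℂ (x (f i)) (f i) : ℂ).re|
        ≤ ∑' i, ((inner ℂ (x₁ (f i)) (f i) : ℂ).re + (inner ℂ (x₂ (f i)) (f i) : ℂ).re) :=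
          Summable.tsum_le_tsum hbound habs hPQ
      _ = (φ.toFun x₁).toReal + (φ.toFun x₂).toReal := by rw [Summable.tsum_add hP hQ, hPs, hQs]
      _ = (φ.toFun (x₁ + x₂)).toReal := by
          rw [φ.toFun_add_of_mPos h₁ h₂, ENNReal.toReal_add h₁.2.2.ne h₂.2.2.ne]
  · rw [tsum_congr hsplit, Summable.tsum_sub hP hQ, hPs, hQs, hd, φ.tilde_eq h₁ h₂]


end Weight

/-- Let `φ` be a faithful normal semifinite weight on a von Neumann
algebra `M` acting on a complex Hilbert space `H` (normal in the sense that `φ` admits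
a representation). Let `(x_n)` be a sequence in `m_φ^sa` which is Cauchy with respect
to `‖·‖_φ` and such that for all `f, g ∈ D_φ` the limit `a(f,g) = lim_n ⟨x_n f, g⟩`
exists. Then for every representation `(f_i)_{i∈I}` of `φ`, the family
`(a(f_i, f_i))_{i∈I}` is absolutely summable and `Σ_{i∈I} a(f_i, f_i) = lim_n φ̃(x_n)`;
in particular, the sum `Σ_{i∈I} a(f_i, f_i)` does not depend on the choice of the
representation of `φ`. -/
theorem statement1 {H : Type*} [NormedAddCommGroup H] [InnerProductSpace ℂ H]
    [CompleteSpace H] {M : VonNeumannAlgebra H} (φ : Weight M)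
    (hfaithful : φ.IsFaithful) (hsemifinite : φ.IsSemifinite) (hnormal : φ.IsNormal)
    (x : ℕ → (H →L[ℂ] H)) (hx : ∀ n, x n ∈ φ.mSa)
    (hcauchy : ∀ ε : ℝ, 0 < ε → ∃ N : ℕ, ∀ m ≥ N, ∀ n ≥ N, φ.phiNorm (x m - x n) < ε)
    (a : H → H → ℂ)
    (ha : ∀ f ∈ φ.lineal, ∀ g ∈ φ.lineal,
      Filter.Tendsto (fun n => (inner ℂ ((x n) f) g : ℂ)) Filter.atTop (nhds (a f g))) :
    ∃ L : ℝ, Filter.Tendsto (fun n => φ.tilde (x n)) Filter.atTop (nhds L) ∧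
      ∀ {I : Type*} (f : I → H), φ.IsRepresentation f →
        Summable (fun i => ‖a (f i) (f i)‖) ∧ ∑' i, a (f i) (f i) = (L : ℂ) := by
  classical
  have hx' := hx
  simp only [Weight.mSa, Set.mem_setOf_eq] at hx'
  choose x1 hx1 x2 hx2 hdec using hx'
  have hmem1 : ∀ m n, x1 m + x2 n ∈ φ.mPos := fun m n => φ.add_mem_mPos (hx1 m) (hx2 n)
  have hmem2 : ∀ m n, x2 m + x1 n ∈ φ.mPos := fun m n => φ.add_mem_mPos (hx2 m) (hx1 n)
  have hdiff : ∀ m n, x m - x n = (x1 m + x2 n) - (x2 m + x1 n) := by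
    intro m n; rw [hdec m, hdec n]; abel
  have hsub_mem : ∀ m n, x m - x n ∈ φ.mSa := fun m n =>
    ⟨_, hmem1 m n, _, hmem2 m n, hdiff m n⟩
  have ht : ∀ n, φ.tilde (x n) = (φ.toFun (x1 n)).toReal - (φ.toFun (x2 n)).toReal :=
    fun n => by rw [hdec n, φ.tilde_eq (hx1 n) (hx2 n)]
  have htilde_sub : ∀ m n, φ.tilde (x m - x n) = φ.tilde (x m) - φ.tilde (x n) := by
    intro m n
    rw [hdiff m n, φ.tilde_eq (hmem1 m n) (hmem2 m n), ht m, ht n,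
      φ.toFun_add_of_mPos (hx1 m) (hx2 n), φ.toFun_add_of_mPos (hx2 m) (hx1 n),
      ENNReal.toReal_add (hx1 m).2.2.ne (hx2 n).2.2.ne,
      ENNReal.toReal_add (hx2 m).2.2.ne (hx1 n).2.2.ne]
    ring
  have hcs : CauchySeq (fun n => φ.tilde (x n)) := by
    rw [Metric.cauchySeq_iff]
    intro ε hε
    obtain ⟨N, hN⟩ := hcauchy ε hε
    refine ⟨N, fun m hm n hn => ?_⟩
    rw [Real.dist_eq, ← htilde_sub m n]
    exact lt_of_le_of_lt (φ.abs_tilde_le_phiNorm (hsub_mem m n)) (hN m hm n hn)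
  obtain ⟨L, hL⟩ := cauchySeq_tendsto_of_complete hcs
  refine ⟨L, hL, ?_⟩
  intro I f hf
  have hlineal : ∀ i, f i ∈ φ.lineal := φ.mem_lineal_of_rep hf
  set s : ℕ → I → ℝ := fun n i => (inner ℂ (x n (f i)) (f i) : ℂ).re with hs
  have hkey : ∀ n, Summable (fun i => |s n i|) ∧
      ∑' i, |s n i| ≤ (φ.toFun (x1 n + x2 n)).toReal ∧
      ∑' i, s n i = φ.tilde (x n) :=
    fun n => φ.key hf (hx1 n) (hx2 n) (hdec n)
  have hCau : ∀ ε : ℝ, 0 < ε → ∃ N, ∀ m ≥ N, ∀ n ≥ N,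
      Summable (fun i => |s m i - s n i|) ∧ ∑' i, |s m i - s n i| ≤ ε := by
    intro ε hε
    obtain ⟨N, hN⟩ := hcauchy ε hε
    refine ⟨N, fun m hm n hn => ?_⟩
    have hlt : sInf {r : ℝ | ∃ y₁ ∈ φ.mPos, ∃ y₂ ∈ φ.mPos,
        x m - x n = y₁ - y₂ ∧ r = (φ.toFun (y₁ + y₂)).toReal} < ε := hN m hm n hn
    have hne : {r : ℝ | ∃ y₁ ∈ φ.mPos, ∃ y₂ ∈ φ.mPos,
        x m - x n = y₁ - y₂ ∧ r = (φ.toFun (y₁ + y₂)).toReal}.Nonempty :=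
      ⟨_, _, hmem1 m n, _, hmem2 m n, hdiff m n, rfl⟩
    obtain ⟨r, ⟨y₁, hy₁, y₂, hy₂, hdy, rfl⟩, hrlt⟩ := exists_lt_of_csInf_lt hne hlt
    obtain ⟨hsum, hle, -⟩ := φ.key hf hy₁ hy₂ hdy
    have hterm : ∀ i, (inner ℂ ((x m - x n) (f i)) (f i) : ℂ).re = s m i - s n i := by
      intro i
      simp [hs, ContinuousLinearMap.sub_apply, inner_sub_left]
    refine ⟨hsum.congr fun i => by rw [hterm i], ?_⟩
    calc ∑' i, |s m i - s n i| = ∑' i, |(inner ℂ ((x m - x n) (f i)) (f i) : ℂ).re| :=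
          tsum_congr fun i => by rw [hterm i]
      _ ≤ (φ.toFun (y₁ + y₂)).toReal := hle
      _ ≤ ε := hrlt.le
  have haim : ∀ i, a (f i) (f i) = (((a (f i) (f i)).re : ℝ) : ℂ) := by
    intro i
    have h1 := ha (f i) (hlineal i) (f i) (hlineal i)
    have h2 : Tendsto (fun n => (inner ℂ (x n (f i)) (f i) : ℂ).im) atTop
        (nhds (a (f i) (f i)).im) := (Complex.continuous_im.tendsto _).comp h1
    have h3 : ∀ n, (inner ℂ (x n (f i)) (f i) : ℂ).im = 0 :=
      fun n => φ.im_inner_eq_zero (hx n) (f i)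
    have h2' : Tendsto (fun _ : ℕ => (0 : ℝ)) atTop (nhds (a (f i) (f i)).im) := by
      simpa only [h3] using h2
    have him : (a (f i) (f i)).im = 0 := tendsto_nhds_unique h2' tendsto_const_nhds
    exact Complex.ext (by simp) (by simp [him])
  set A : I → ℝ := fun i => (a (f i) (f i)).re with hA
  have hAlim : ∀ i, Tendsto (fun n => s n i) atTop (nhds (A i)) :=
    fun i => (Complex.continuous_re.tendsto _).comp (ha (f i) (hlineal i) (f i) (hlineal i))
  have hmain : ∀ ε : ℝ, 0 < ε → ∃ N, ∀ n ≥ N,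
      Summable (fun i => |A i - s n i|) ∧ ∑' i, |A i - s n i| ≤ ε := by
    intro ε hε
    obtain ⟨N, hN⟩ := hCau ε hε
    refine ⟨N, fun n hn => ?_⟩
    have hfin : ∀ F : Finset I, ∑ i ∈ F, |A i - s n i| ≤ ε := by
      intro F
      have hlim : Tendsto (fun m => ∑ i ∈ F, |s m i - s n i|) atTop
          (nhds (∑ i ∈ F, |A i - s n i|)) :=
        tendsto_finset_sum F fun i _ => ((hAlim i).sub tendsto_const_nhds).abs
      refine le_of_tendsto hlim ?_
      filter_upwards [eventually_ge_atTop N] with m hm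
      obtain ⟨hsum, hle⟩ := hN m hm n hn
      exact le_trans (Summable.sum_le_tsum F (fun i _ => abs_nonneg _) hsum) hle
    have hsummable : Summable (fun i => |A i - s n i|) :=
      summable_of_sum_le (fun i => abs_nonneg _) hfin
    exact ⟨hsummable, Summable.tsum_le_of_sum_le hsummable hfin⟩
  obtain ⟨N₀, hN₀⟩ := hmain 1 one_pos
  have h1 := hN₀ N₀ le_rfl
  have hAabs : Summable (fun i => |A i|) := by
    refine Summable.of_nonneg_of_le (fun i => abs_nonneg _) (fun i => ?_)
      (h1.1.add (hkey N₀).1)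
    calc |A i| = |(A i - s N₀ i) + s N₀ i| := by ring_nf
      _ ≤ |A i - s N₀ i| + |s N₀ i| := abs_add_le _ _
  have hAsum : Summable A := summable_abs_iff.mp hAabs
  have hnormsum : Summable (fun i => ‖a (f i) (f i)‖) := by
    refine hAabs.congr fun i => ?_
    rw [haim i, Complex.norm_real, Real.norm_eq_abs]
  have htendA : Tendsto (fun n => φ.tilde (x n)) atTop (nhds (∑' i, A i)) := by
    rw [Metric.tendsto_atTop]
    intro ε hε
    obtain ⟨N, hN⟩ := hmain (ε / 2) (half_pos hε)
    refine ⟨N, fun n hn => ?_⟩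
    obtain ⟨hsum, hle⟩ := hN n hn
    have hsn : Summable (fun i => s n i) := summable_abs_iff.mp (hkey n).1
    have hsum' : Summable (fun i => |s n i - A i|) :=
      hsum.congr fun i => abs_sub_comm _ _
    have hdiffsum : Summable (fun i => s n i - A i) := summable_abs_iff.mp hsum'
    have hns : Summable (fun i => ‖s n i - A i‖) := by
      simpa only [Real.norm_eq_abs] using hsum'
    have h5 : ‖∑' i, (s n i - A i)‖ ≤ ∑' i, ‖s n i - A i‖ := norm_tsum_le_tsum_norm hns
    have h6 : ∑' i, ‖s n i - A i‖ = ∑' i, |A i - s n i| :=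
      tsum_congr fun i => by rw [Real.norm_eq_abs, abs_sub_comm]
    have h7 : ∑' i, (s n i - A i) = φ.tilde (x n) - ∑' i, A i := by
      rw [Summable.tsum_sub hsn hAsum, (hkey n).2.2]
    have hdist : |φ.tilde (x n) - ∑' i, A i| ≤ ε / 2 := by
      rw [← h7, ← Real.norm_eq_abs]
      exact h5.trans (h6.le.trans hle)
    rw [Real.dist_eq]
    exact lt_of_le_of_lt hdist (half_lt_self hε)
  have hLA : L = ∑' i, A i := tendsto_nhds_unique hL htendA
  refine ⟨hnormsum, ?_⟩
  calc ∑' i, a (f i) (f i) = ∑' i, ((A i : ℝ) : ℂ) := tsum_congr haim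
    _ = ((∑' i, A i : ℝ) : ℂ) := (Complex.ofReal_tsum A).symm
    _ = (L : ℂ) := by rw [hLA]
end
end

section
/- Let φ be a weight on a von Neumann algebra M acting on a complex Hilbert space H, and let (x_n) be a sequence in m_φ^sa which is Cauchy with respect to the norm ‖·‖_φ. Then for all f, g ∈ D_φ, the limit lim_n ⟨x_n f, g⟩ exists in ℂ. -/
open scoped ENNReal NNReal ComplexOrder
open Filter Topology

noncomputable section

universe v

variable {H : Type*} [NormedAddCommGroup H] [InnerProductSpace ℂ H] [CompleteSpace H]

set_option synthInstance.maxHeartbeats 1000000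
set_option maxHeartbeats 1000000

private lemma cs_positive {H : Type*} [NormedAddCommGroup H] [InnerProductSpace ℂ H]
    [CompleteSpace H] (y : H →L[ℂ] H) (hy : y.IsPositive) (f g : H) :
    ‖(inner ℂ (y f) g : ℂ)‖ ≤
      Real.sqrt (inner ℂ (y f) f : ℂ).re * Real.sqrt (inner ℂ (y g) g : ℂ).re := by
  have h0 : 0 ≤ y := (ContinuousLinearMap.nonneg_iff_isPositive y).mpr hy
  set s := CFC.sqrt y with hsdef
  have hs0 : 0 ≤ s := CFC.sqrt_nonneg (a := y)
  have hmul : s * s = y := CFC.sqrt_mul_sqrt_self y h0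
  have hsp : s.IsPositive := (ContinuousLinearMap.nonneg_iff_isPositive s).mp hs0
  have hsym : ∀ u v : H, (inner ℂ (s u) v : ℂ) = inner ℂ u (s v) :=
    (ContinuousLinearMap.isSelfAdjoint_iff_isSymmetric.mp hsp.isSelfAdjoint)
  have happ : ∀ u, y u = s (s u) := by intro u; rw [← hmul]; rfl
  have key : (inner ℂ (y f) g : ℂ) = inner ℂ (s f) (s g) := by rw [happ, hsym]
  have hf2 : ‖s f‖ ^ 2 = (inner ℂ (y f) f : ℂ).re := by
    rw [happ, hsym]; exact (inner_self_eq_norm_sq (𝕜 := ℂ) (s f)).symm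
  have hg2 : ‖s g‖ ^ 2 = (inner ℂ (y g) g : ℂ).re := by
    rw [happ, hsym]; exact (inner_self_eq_norm_sq (𝕜 := ℂ) (s g)).symm
  calc ‖(inner ℂ (y f) g : ℂ)‖ = ‖(inner ℂ (s f) (s g) : ℂ)‖ := by rw [key]
    _ ≤ ‖s f‖ * ‖s g‖ := norm_inner_le_norm _ _
    _ = _ := by
        rw [← Real.sqrt_sq (norm_nonneg (s f)), ← Real.sqrt_sq (norm_nonneg (s g)), hf2, hg2]

private lemma mPos_add' {H : Type*} [NormedAddCommGroup H] [InnerProductSpace ℂ H]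
    [CompleteSpace H] {M : VonNeumannAlgebra H} (φ : Weight M) {a b : H →L[ℂ] H}
    (ha : a ∈ φ.mPos) (hb : b ∈ φ.mPos) : a + b ∈ φ.mPos := by
  obtain ⟨haM, haP, haF⟩ := ha
  obtain ⟨hbM, hbP, hbF⟩ := hb
  refine ⟨add_mem haM hbM, haP.add hbP, ?_⟩
  rw [φ.map_add' a b haM hbM haP hbP]
  exact ENNReal.add_lt_top.mpr ⟨haF, hbF⟩

private lemma mSa_sub' {H : Type*} [NormedAddCommGroup H] [InnerProductSpace ℂ H]
    [CompleteSpace H] {M : VonNeumannAlgebra H} (φ : Weight M) {a b : H →L[ℂ] H}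
    (ha : a ∈ φ.mSa) (hb : b ∈ φ.mSa) : a - b ∈ φ.mSa := by
  obtain ⟨a₁, ha₁, a₂, ha₂, rfl⟩ := ha
  obtain ⟨b₁, hb₁, b₂, hb₂, rfl⟩ := hb
  exact ⟨a₁ + b₂, mPos_add' φ ha₁ hb₂, a₂ + b₁, mPos_add' φ ha₂ hb₁, by abel⟩

private lemma lineal_bound' {H : Type*} [NormedAddCommGroup H] [InnerProductSpace ℂ H]
    [CompleteSpace H] {M : VonNeumannAlgebra H} (φ : Weight M) {f : H} {l : ℝ} (hl : 0 < l)
    (hf : ∀ z : H →L[ℂ] H, z ∈ M → z.IsPositive →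
      ENNReal.ofReal (inner ℂ (z f) f : ℂ).re ≤ ENNReal.ofReal l * φ.toFun z)
    {z : H →L[ℂ] H} (hz : z ∈ φ.mPos) :
    (inner ℂ (z f) f : ℂ).re ≤ l * (φ.toFun z).toReal := by
  obtain ⟨hzM, hzP, hzF⟩ := hz
  have h := hf z hzM hzP
  have hrw : ENNReal.ofReal l * φ.toFun z = ENNReal.ofReal (l * (φ.toFun z).toReal) := by
    rw [ENNReal.ofReal_mul hl.le, ENNReal.ofReal_toReal hzF.ne]
  rw [hrw] at h
  exact (ENNReal.ofReal_le_ofReal_iff (by positivity)).mp h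

private lemma key_bound' {H : Type*} [NormedAddCommGroup H] [InnerProductSpace ℂ H]
    [CompleteSpace H] {M : VonNeumannAlgebra H} (φ : Weight M) {f g : H}
    {lf lg : ℝ} (hlf : 0 < lf) (hlg : 0 < lg)
    (hf : ∀ z : H →L[ℂ] H, z ∈ M → z.IsPositive →
      ENNReal.ofReal (inner ℂ (z f) f : ℂ).re ≤ ENNReal.ofReal lf * φ.toFun z)
    (hg : ∀ z : H →L[ℂ] H, z ∈ M → z.IsPositive →
      ENNReal.ofReal (inner ℂ (z g) g : ℂ).re ≤ ENNReal.ofReal lg * φ.toFun z)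
    {y : H →L[ℂ] H} (hy : y ∈ φ.mSa) :
    ‖(inner ℂ (y f) g : ℂ)‖ ≤ Real.sqrt (lf * lg) * φ.phiNorm y := by
  set C := Real.sqrt (lf * lg) with hCdef
  have hC : 0 < C := Real.sqrt_pos.mpr (mul_pos hlf hlg)
  have hSne : {r : ℝ | ∃ x₁ ∈ φ.mPos, ∃ x₂ ∈ φ.mPos, y = x₁ - x₂ ∧
      r = (φ.toFun (x₁ + x₂)).toReal}.Nonempty := by
    obtain ⟨y₁, h₁, y₂, h₂, hdec⟩ := hy
    exact ⟨(φ.toFun (y₁ + y₂)).toReal, y₁, h₁, y₂, h₂, hdec, rfl⟩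
  have hbound : ∀ r ∈ {r : ℝ | ∃ x₁ ∈ φ.mPos, ∃ x₂ ∈ φ.mPos, y = x₁ - x₂ ∧
      r = (φ.toFun (x₁ + x₂)).toReal}, ‖(inner ℂ (y f) g : ℂ)‖ / C ≤ r := by
    rintro r ⟨y₁, h₁, y₂, h₂, hdec, rfl⟩
    rw [div_le_iff₀ hC]
    set t₁ := (φ.toFun y₁).toReal with ht₁
    set t₂ := (φ.toFun y₂).toReal with ht₂
    have hsum : (φ.toFun (y₁ + y₂)).toReal = t₁ + t₂ := by
      rw [φ.map_add' y₁ y₂ h₁.1 h₂.1 h₁.2.1 h₂.2.1,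
        ENNReal.toReal_add h₁.2.2.ne h₂.2.2.ne]
    have est : ∀ (z : H →L[ℂ] H), z ∈ φ.mPos →
        ‖(inner ℂ (z f) g : ℂ)‖ ≤ C * (φ.toFun z).toReal := by
      intro z hz
      have h1 : ‖(inner ℂ (z f) g : ℂ)‖ ≤
          Real.sqrt (inner ℂ (z f) f : ℂ).re * Real.sqrt (inner ℂ (z g) g : ℂ).re :=
        cs_positive z hz.2.1 f g
      have h2 : Real.sqrt (inner ℂ (z f) f : ℂ).re ≤ Real.sqrt (lf * (φ.toFun z).toReal) :=
        Real.sqrt_le_sqrt (lineal_bound' φ hlf hf hz)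
      have h3 : Real.sqrt (inner ℂ (z g) g : ℂ).re ≤ Real.sqrt (lg * (φ.toFun z).toReal) :=
        Real.sqrt_le_sqrt (lineal_bound' φ hlg hg hz)
      have h4 : Real.sqrt (lf * (φ.toFun z).toReal) * Real.sqrt (lg * (φ.toFun z).toReal)
          = C * (φ.toFun z).toReal := by
        rw [← Real.sqrt_mul (by positivity), hCdef]
        rw [show lf * (φ.toFun z).toReal * (lg * (φ.toFun z).toReal)
            = (lf * lg) * ((φ.toFun z).toReal * (φ.toFun z).toReal) by ring]
        rw [Real.sqrt_mul (by positivity),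
          Real.sqrt_mul_self (ENNReal.toReal_nonneg (a := φ.toFun z))]
      calc ‖(inner ℂ (z f) g : ℂ)‖ ≤ _ := h1
        _ ≤ Real.sqrt (lf * (φ.toFun z).toReal) * Real.sqrt (lg * (φ.toFun z).toReal) :=
          mul_le_mul h2 h3 (Real.sqrt_nonneg _) (Real.sqrt_nonneg _)
        _ = C * (φ.toFun z).toReal := h4
    have hsplit : (inner ℂ (y f) g : ℂ) = inner ℂ (y₁ f) g - inner ℂ (y₂ f) g := by
      rw [hdec]; rw [ContinuousLinearMap.sub_apply, inner_sub_left]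
    calc ‖(inner ℂ (y f) g : ℂ)‖ = ‖(inner ℂ (y₁ f) g : ℂ) - inner ℂ (y₂ f) g‖ := by rw [hsplit]
      _ ≤ ‖(inner ℂ (y₁ f) g : ℂ)‖ + ‖(inner ℂ (y₂ f) g : ℂ)‖ := norm_sub_le _ _
      _ ≤ C * t₁ + C * t₂ := add_le_add (est y₁ h₁) (est y₂ h₂)
      _ = (φ.toFun (y₁ + y₂)).toReal * C := by rw [hsum]; ring
  have hinf : ‖(inner ℂ (y f) g : ℂ)‖ / C ≤ φ.phiNorm y := le_csInf hSne hbound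
  calc ‖(inner ℂ (y f) g : ℂ)‖ = ‖(inner ℂ (y f) g : ℂ)‖ / C * C := by field_simp
    _ ≤ φ.phiNorm y * C := mul_le_mul_of_nonneg_right hinf hC.le
    _ = C * φ.phiNorm y := mul_comm _ _


/-- Let `φ` be a weight on a von Neumann algebra `M` acting on a
complex Hilbert space `H`, and let `(x_n)` be a sequence in `m_φ^sa` which is Cauchy
with respect to the norm `‖·‖_φ`. Then for all `f, g ∈ D_φ`, the limit
`lim_n ⟨x_n f, g⟩` exists in `ℂ`. -/
theorem statement2 {H : Type*} [NormedAddCommGroup H] [InnerProductSpace ℂ H]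
    [CompleteSpace H] {M : VonNeumannAlgebra H} (φ : Weight M)
    (x : ℕ → (H →L[ℂ] H)) (hx : ∀ n, x n ∈ φ.mSa)
    (hcauchy : ∀ ε : ℝ, 0 < ε → ∃ N : ℕ, ∀ m ≥ N, ∀ n ≥ N, φ.phiNorm (x m - x n) < ε) :
    ∀ f ∈ φ.lineal, ∀ g ∈ φ.lineal,
      ∃ L : ℂ, Filter.Tendsto (fun n => (inner ℂ ((x n) f) g : ℂ)) Filter.atTop (nhds L) := by
  
  intro f hf g hg
  obtain ⟨lf, hlf, hfb⟩ := hf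
  obtain ⟨lg, hlg, hgb⟩ := hg
  set C := Real.sqrt (lf * lg) with hCdef
  have hC : 0 < C := Real.sqrt_pos.mpr (mul_pos hlf hlg)
  suffices hcs : CauchySeq (fun n => (inner ℂ ((x n) f) g : ℂ)) by
    obtain ⟨L, hL⟩ := cauchySeq_tendsto_of_complete hcs
    exact ⟨L, hL⟩
  rw [Metric.cauchySeq_iff]
  intro ε hε
  obtain ⟨N, hN⟩ := hcauchy (ε / C) (by positivity)
  refine ⟨N, fun m hm n hn => ?_⟩
  have hsub : x m - x n ∈ φ.mSa := mSa_sub' φ (hx m) (hx n)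
  have hb := key_bound' φ hlf hlg hfb hgb hsub
  have heq : (inner ℂ ((x m) f) g : ℂ) - inner ℂ ((x n) f) g = inner ℂ ((x m - x n) f) g := by
    rw [ContinuousLinearMap.sub_apply, inner_sub_left]
  rw [dist_eq_norm, heq]
  calc ‖(inner ℂ ((x m - x n) f) g : ℂ)‖ ≤ C * φ.phiNorm (x m - x n) := hb
    _ < C * (ε / C) := mul_lt_mul_of_pos_left (hN m hm n hn) hC
    _ = ε := by field_simp
end
end

section
/- Let E be a real Banach space which is an ordered vector space whose positive cone E⁺ = {y ∈ E : 0 ≤ y} is closed, let u ∈ E⁺ be such that the order interval [0, u] = {ψ ∈ E : 0 ≤ ψ ≤ u} is norm-bounded, and let F : E → ℝ be a linear functional with the following countable-additivity property: whenever (ψ_n)_{n≥1} is a sequence in E⁺ whose series converges in norm to some ψ ∈ E, the series Σ_n F(ψ_n) converges and equals F(ψ). Then sup{|F(ψ)| : ψ ∈ [0, u]} < ∞. -/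
open Filter Topology

/-- Let `E` be a real Banach space which is an ordered vector space
(the order is translation-invariant and invariant under multiplication by nonnegative
scalars) whose positive cone `E⁺ = {y : 0 ≤ y}` is closed, let `u ∈ E⁺` be such that
the order interval `[0, u]` is norm-bounded, and let `F : E → ℝ` be a linear
functional with the following countable-additivity property: whenever `(ψ_n)` is a
sequence in `E⁺` whose series converges in norm to some `ψ ∈ E`, the series
`Σ_n F(ψ_n)` converges and equals `F(ψ)`. Then `sup {|F(ψ)| : ψ ∈ [0, u]} < ∞`. -/
theorem statement9 {E : Type*} [NormedAddCommGroup E] [NormedSpace ℝ E]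
    [CompleteSpace E] [PartialOrder E]
    (hadd : ∀ z x y : E, x ≤ y → x + z ≤ y + z)
    (hsmul : ∀ c : ℝ, 0 ≤ c → ∀ x y : E, x ≤ y → c • x ≤ c • y)
    (hclosed : IsClosed {y : E | 0 ≤ y})
    (u : E) (hu : 0 ≤ u)
    (hbdd : ∃ C : ℝ, ∀ ψ : E, 0 ≤ ψ → ψ ≤ u → ‖ψ‖ ≤ C)
    (F : E →ₗ[ℝ] ℝ)
    (hF : ∀ (ψ : ℕ → E), (∀ n, 0 ≤ ψ n) → ∀ s : E,
      Filter.Tendsto (fun k => ∑ n ∈ Finset.range k, ψ n) Filter.atTop (nhds s) →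
      Filter.Tendsto (fun k => ∑ n ∈ Finset.range k, F (ψ n)) Filter.atTop (nhds (F s))) :
    ∃ C : ℝ, ∀ ψ : E, 0 ≤ ψ → ψ ≤ u → |F ψ| ≤ C := by
  by_contra h
  push_neg at h
  choose g hg0 hgu hgF using fun n : ℕ => h ((4:ℝ)^n)
  obtain ⟨C, hC⟩ := hbdd
  set φ : ℕ → E := fun n => (1/2:ℝ)^n • g n with hφ
  have hφ0 : ∀ n, 0 ≤ φ n := fun n => by
    have := hsmul ((1/2:ℝ)^n) (by positivity) 0 (g n) (hg0 n)
    simpa [hφ] using this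
  have hsum : Summable φ := by
    apply Summable.of_norm_bounded (g := fun n => C * (1/2:ℝ)^n)
      ((summable_geometric_of_lt_one (by norm_num) (by norm_num)).mul_left C)
    intro n
    rw [hφ, norm_smul]
    have h1 : ‖(1/2:ℝ)^n‖ = (1/2:ℝ)^n := by
      rw [Real.norm_eq_abs, abs_pow, abs_of_pos (show (0:ℝ) < 1/2 by norm_num)]
    rw [h1, mul_comm]
    exact mul_le_mul_of_nonneg_right (hC _ (hg0 n) (hgu n)) (by positivity)
  obtain ⟨s, hs⟩ := hsum
  have htend := hF φ hφ0 s hs.tendsto_sum_nat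
  have hterm : Tendsto (fun n => F (φ n)) atTop (nhds 0) := by
    have h2 : Tendsto (fun k => ∑ n ∈ Finset.range (k+1), F (φ n)) atTop (nhds (F s)) :=
      htend.comp (tendsto_add_atTop_nat 1)
    have := h2.sub htend
    simpa [Finset.sum_range_succ] using this
  have hge : ∀ n : ℕ, (1:ℝ) ≤ |F (φ n)| := by
    intro n
    have : F (φ n) = (1/2:ℝ)^n * F (g n) := by simp [hφ]
    rw [this, abs_mul, abs_pow]
    have h4 : (4:ℝ)^n ≤ |F (g n)| := (hgF n).le
    calc (1:ℝ) ≤ |(1/2:ℝ)|^n * 4^n := by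
          rw [abs_of_pos (show (0:ℝ) < 1/2 by norm_num), ← mul_pow]
          norm_num
          exact one_le_pow₀ (by norm_num)
      _ ≤ |(1/2:ℝ)|^n * |F (g n)| :=
          mul_le_mul_of_nonneg_left h4 (by positivity)
  have habs : Tendsto (fun n => |F (φ n)|) atTop (nhds 0) := by
    simpa using hterm.abs
  obtain ⟨n, hn⟩ := (habs.eventually (eventually_lt_nhds (show (0:ℝ) < 1 by norm_num))).exists
  exact absurd hn (not_lt.mpr (hge n))
end
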